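/- Let F_q be a finite field, ∂₁^X ∈ F_q^{X₀×X₁} and ∂₂^X ∈ F_q^{X₁×X₂} matrices with ∂₁^X ∂₂^X = 0 and ker ∂₁^X ⊄ im ∂₂^X, and let ∂₁^Y ∈ F_q^{B×A} be a surjective matrix with ker ∂₁^Y ≠ 0. Let 𝒳 be the product complex with ∂₂^𝒳(w) = ((∂₂^X ⊗ I_A)w, (I_{X₂} ⊗ ∂₁^Y)w) and ∂₁^𝒳(u, v) = ((∂₁^X ⊗ I_A)u, −(I_{X₁} ⊗ ∂₁^Y)u + (∂₂^X ⊗ I_B)v). Define the 1-systoles S₁(X) = min{wt(z) : z ∈ ker ∂₁^X \ im ∂₂^X}, S₁(Y) = min{wt(z) : z ∈ ker ∂₁^Y, z ≠ 0}, and S₁(𝒳) = min{wt(z) : z ∈ ker ∂₁^𝒳 \ im ∂₂^𝒳}. Then S₁(𝒳) = S₁(X) · S₁(Y). -/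

import Mathlib

open Matrix Kronecker

lemma kron_one_mulVec {F : Type*} [CommRing F] {X Y A : Type*} [Fintype Y] [Fintype A]
    [DecidableEq A] (M : Matrix X Y F) (w : Y × A → F) (i : X) (a : A) :
    (M ⊗ₖ (1 : Matrix A A F)).mulVec w (i, a) = ∑ j, M i j * w (j, a) := by
  simp only [Matrix.mulVec, dotProduct, Matrix.kroneckerMap_apply, Matrix.one_apply]
  rw [Fintype.sum_prod_type]
  refine Finset.sum_congr rfl fun j _ => ?_
  simp [mul_ite, ite_mul, Finset.sum_ite_eq]

lemma one_kron_mulVec {F : Type*} [CommRing F] {X A B : Type*} [Fintype X] [Fintype A]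
    [DecidableEq X] (N : Matrix B A F) (w : X × A → F) (i : X) (b : B) :
    ((1 : Matrix X X F) ⊗ₖ N).mulVec w (i, b) = ∑ a, N b a * w (i, a) := by
  simp only [Matrix.mulVec, dotProduct, Matrix.kroneckerMap_apply, Matrix.one_apply]
  rw [Fintype.sum_prod_type_right]
  refine Finset.sum_congr rfl fun a _ => ?_
  simp [mul_ite, ite_mul, Finset.sum_ite_eq]

lemma hammingNorm_prod {F : Type*} [Zero F] [DecidableEq F] {X A : Type*} [Fintype X] [Fintype A]
    (w : X × A → F) : hammingNorm w = ∑ a, hammingNorm (fun j => w (j, a)) := by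
  simp only [hammingNorm, Finset.card_filter]
  rw [Fintype.sum_prod_type_right]

/-- the 1-systole of the high-dimensional-expander product complex is
multiplicative: `S₁(𝒳) = S₁(X) · S₁(Y)`. -/
theorem hdx_one_systole
    {F : Type*} [Field F] [Fintype F] [DecidableEq F]
    {X₀ X₁ X₂ A B : Type*}
    [Fintype X₀] [Fintype X₁] [Fintype X₂] [Fintype A] [Fintype B]
    [DecidableEq X₀] [DecidableEq X₁] [DecidableEq X₂] [DecidableEq A] [DecidableEq B]
    (dX1 : Matrix X₀ X₁ F) (dX2 : Matrix X₁ X₂ F) (hX : dX1 * dX2 = 0)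
    (hXne : ∃ z : X₁ → F, dX1.mulVec z = 0 ∧ ¬∃ u : X₂ → F, dX2.mulVec u = z)
    (dY : Matrix B A F) (hYsurj : Function.Surjective dY.mulVec)
    (hYker : ∃ z : A → F, z ≠ 0 ∧ dY.mulVec z = 0) :
    sInf {w : ℕ | ∃ z : ((X₁ × A) → F) × ((X₂ × B) → F),
        ((dX1 ⊗ₖ (1 : Matrix A A F)).mulVec z.1 = 0 ∧
          (dX2 ⊗ₖ (1 : Matrix B B F)).mulVec z.2
            - ((1 : Matrix X₁ X₁ F) ⊗ₖ dY).mulVec z.1 = 0) ∧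
        (¬∃ u : X₂ × A → F,
          ((dX2 ⊗ₖ (1 : Matrix A A F)).mulVec u,
            ((1 : Matrix X₂ X₂ F) ⊗ₖ dY).mulVec u) = z) ∧
        hammingNorm z.1 + hammingNorm z.2 = w} =
    sInf {w : ℕ | ∃ z : X₁ → F,
        dX1.mulVec z = 0 ∧ (¬∃ u : X₂ → F, dX2.mulVec u = z) ∧ hammingNorm z = w} *
    sInf {w : ℕ | ∃ z : A → F, dY.mulVec z = 0 ∧ z ≠ 0 ∧ hammingNorm z = w} := by
  classical
  set SX : Set ℕ := {w : ℕ | ∃ z : X₁ → F,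
      dX1.mulVec z = 0 ∧ (¬∃ u : X₂ → F, dX2.mulVec u = z) ∧ hammingNorm z = w} with hSXdef
  set SY : Set ℕ := {w : ℕ | ∃ z : A → F, dY.mulVec z = 0 ∧ z ≠ 0 ∧ hammingNorm z = w}
    with hSYdef
  set SP : Set ℕ := {w : ℕ | ∃ z : ((X₁ × A) → F) × ((X₂ × B) → F),
      ((dX1 ⊗ₖ (1 : Matrix A A F)).mulVec z.1 = 0 ∧
        (dX2 ⊗ₖ (1 : Matrix B B F)).mulVec z.2
          - ((1 : Matrix X₁ X₁ F) ⊗ₖ dY).mulVec z.1 = 0) ∧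
      (¬∃ u : X₂ × A → F,
        ((dX2 ⊗ₖ (1 : Matrix A A F)).mulVec u,
          ((1 : Matrix X₂ X₂ F) ⊗ₖ dY).mulVec u) = z) ∧
      hammingNorm z.1 + hammingNorm z.2 = w} with hSPdef
  -- minimizers for X and Y
  have hSXne : SX.Nonempty := by
    obtain ⟨z, h1, h2⟩ := hXne
    exact ⟨hammingNorm z, z, h1, h2, rfl⟩
  have hSYne : SY.Nonempty := by
    obtain ⟨z, h1, h2⟩ := hYker
    exact ⟨hammingNorm z, z, h2, h1, rfl⟩
  obtain ⟨x, hx1, hx2, hxw⟩ := Nat.sInf_mem hSXne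
  obtain ⟨y, hy1, hy2, hyw⟩ := Nat.sInf_mem hSYne
  -- the product witness
  set zP : ((X₁ × A) → F) × ((X₂ × B) → F) :=
    (fun p => x p.1 * y p.2, 0) with hzPdef
  have hPmem : sInf SX * sInf SY ∈ SP := by
    refine ⟨zP, ⟨?_, ?_⟩, ?_, ?_⟩
    · funext p
      obtain ⟨i, a⟩ := p
      rw [kron_one_mulVec]
      have hx1i : ∑ j, dX1 i j * x j = 0 := by
        simpa [Matrix.mulVec, dotProduct] using congrFun hx1 i
      have : ∑ j, dX1 i j * (x j * y a) = (∑ j, dX1 i j * x j) * y a := by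
        rw [Finset.sum_mul]; exact Finset.sum_congr rfl fun j _ => (mul_assoc _ _ _).symm
      simp [this, hx1i, hzPdef]
    · funext p
      obtain ⟨i, b⟩ := p
      have hy1b : dY.mulVec y b = 0 := congrFun hy1 b
      simp only [Matrix.mulVec, dotProduct] at hy1b
      have h2 : ((1 : Matrix X₁ X₁ F) ⊗ₖ dY).mulVec zP.1 (i, b) = 0 := by
        rw [one_kron_mulVec]
        have : ∑ a, dY b a * (x i * y a) = x i * ∑ a, dY b a * y a := by
          rw [Finset.mul_sum]; exact Finset.sum_congr rfl fun a _ => by ring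
        simp [this, hy1b, hzPdef]
      simp only [hzPdef] at h2 ⊢
      simp [h2, Matrix.mulVec_zero]
    · rintro ⟨u, hu⟩
      have hu1 := congrArg Prod.fst hu
      simp only at hu1
      obtain ⟨a₀, ha₀⟩ : ∃ a₀, y a₀ ≠ 0 := by
        by_contra h; push_neg at h; exact hy2 (funext h)
      apply hx2
      refine ⟨fun j => (y a₀)⁻¹ • u (j, a₀), ?_⟩
      funext i
      have := congrFun hu1 (i, a₀)
      rw [kron_one_mulVec] at this
      have hmv : dX2.mulVec (fun j => (y a₀)⁻¹ • u (j, a₀)) i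
          = (y a₀)⁻¹ * ∑ j, dX2 i j * u (j, a₀) := by
        simp only [Matrix.mulVec, dotProduct, smul_eq_mul, Finset.mul_sum]
        exact Finset.sum_congr rfl fun j _ => by ring
      rw [hmv, this]
      field_simp
      rw [hzPdef]; exact mul_comm _ _
    · have : hammingNorm zP.1 = hammingNorm y * hammingNorm x := by
        rw [hammingNorm_prod]
        have hcol : ∀ a, hammingNorm (fun j => x j * y a)
            = if y a ≠ 0 then hammingNorm x else 0 := by
          intro a
          by_cases h : y a = 0
          · simp [hammingNorm, h]
          · simp [hammingNorm, h, mul_eq_zero]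
        simp only [hzPdef, hcol]
        rw [Finset.sum_ite, Finset.sum_const, Finset.sum_const_zero, add_zero,
          smul_eq_mul]
        rfl
      have hz2 : hammingNorm zP.2 = 0 := by simp [hzPdef]
      rw [this, hz2, add_zero, hxw, hyw, mul_comm]
  -- lower bound
  have lower : ∀ w ∈ SP, sInf SX * sInf SY ≤ w := by
    rintro w ⟨⟨z₁, z₂⟩, ⟨hk1, hk2⟩, him, hw⟩
    set W : Submodule F (X₁ → F) := LinearMap.range dX2.mulVecLin with hWdef
    set c : A → (X₁ → F) := fun a j => z₁ (j, a) with hcdef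
    have hc1 : ∀ a, dX1.mulVec (c a) = 0 := by
      intro a; funext i
      have := congrFun hk1 (i, a)
      rw [kron_one_mulVec] at this
      simpa [Matrix.mulVec, dotProduct, hcdef] using this
    have hcol2 : ∀ b, (fun i => ∑ a, dY b a * z₁ (i, a))
        = dX2.mulVec (fun j => z₂ (j, b)) := by
      intro b; funext i
      have := congrFun hk2 (i, b)
      simp only [Pi.sub_apply, Pi.zero_apply, sub_eq_zero] at this
      rw [kron_one_mulVec, one_kron_mulVec] at this
      rw [← this]
      simp [Matrix.mulVec, dotProduct]
    -- some column is not in W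
    have hex : ∃ a₀, c a₀ ∉ W := by
      by_contra hall
      push_neg at hall
      apply him
      have hall' : ∀ a, ∃ u : X₂ → F, dX2.mulVec u = c a := by
        intro a
        obtain ⟨u, hu⟩ := hall a
        exact ⟨u, by simpa [Matrix.mulVecLin_apply] using hu⟩
      choose U hU using hall'
      choose e he using fun b => hYsurj (Pi.single b 1)
      set u₀ : X₂ × A → F := fun p => U p.2 p.1 with hu₀def
      set r : X₂ × B → F :=
        fun p => z₂ p - ((1 : Matrix X₂ X₂ F) ⊗ₖ dY).mulVec u₀ p with hrdef
      have hrcol : ∀ b, dX2.mulVec (fun j => r (j, b)) = 0 := by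
        intro b; funext i
        have h1 : dX2.mulVec (fun j => r (j, b)) i
            = (∑ j, dX2 i j * z₂ (j, b))
              - ∑ j, dX2 i j * (∑ a, dY b a * u₀ (j, a)) := by
          have hra : ∀ j, r (j, b) = z₂ (j, b) - ∑ a, dY b a * u₀ (j, a) := by
            intro j; simp only [hrdef]; rw [one_kron_mulVec]
          simp only [Matrix.mulVec, dotProduct, hra, mul_sub,
            Finset.sum_sub_distrib]
        have h2 : (∑ j, dX2 i j * z₂ (j, b)) = ∑ a, dY b a * z₁ (i, a) := by
          have := congrFun (hcol2 b) i
          simp only [Matrix.mulVec, dotProduct] at this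
          exact this.symm
        have h3 : ∑ j, dX2 i j * (∑ a, dY b a * u₀ (j, a))
            = ∑ a, dY b a * z₁ (i, a) := by
          calc ∑ j, dX2 i j * (∑ a, dY b a * u₀ (j, a))
              = ∑ j, ∑ a, dY b a * (dX2 i j * u₀ (j, a)) := by
                refine Finset.sum_congr rfl fun j _ => ?_
                rw [Finset.mul_sum]
                exact Finset.sum_congr rfl fun a _ => by ring
            _ = ∑ a, ∑ j, dY b a * (dX2 i j * u₀ (j, a)) := Finset.sum_comm
            _ = ∑ a, dY b a * ∑ j, dX2 i j * u₀ (j, a) := by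
                refine Finset.sum_congr rfl fun a _ => ?_
                rw [Finset.mul_sum]
            _ = ∑ a, dY b a * z₁ (i, a) := by
                refine Finset.sum_congr rfl fun a _ => ?_
                congr 1
                simpa [Matrix.mulVec, dotProduct, hu₀def, hcdef] using
                  congrFun (hU a) i
        rw [h1, h2, h3, sub_self]
        simp
      set uc : X₂ × A → F := fun p => ∑ b, r (p.1, b) * e b p.2 with hucdef
      refine ⟨u₀ + uc, ?_⟩
      have hcomp1 : (dX2 ⊗ₖ (1 : Matrix A A F)).mulVec (u₀ + uc) = z₁ := by
        funext p; obtain ⟨i, a⟩ := p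
        rw [Matrix.mulVec_add, Pi.add_apply, kron_one_mulVec, kron_one_mulVec]
        have e1 : ∑ j, dX2 i j * u₀ (j, a) = z₁ (i, a) := by
          simpa [Matrix.mulVec, dotProduct, hu₀def, hcdef] using
            congrFun (hU a) i
        have e2 : ∑ j, dX2 i j * uc (j, a) = 0 := by
          calc ∑ j, dX2 i j * uc (j, a)
              = ∑ j, ∑ b, (dX2 i j * r (j, b)) * e b a := by
                refine Finset.sum_congr rfl fun j _ => ?_
                simp only [hucdef]
                rw [Finset.mul_sum]
                exact Finset.sum_congr rfl fun b _ => by ring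
            _ = ∑ b, (∑ j, dX2 i j * r (j, b)) * e b a := by
                rw [Finset.sum_comm]
                exact Finset.sum_congr rfl fun b _ => (Finset.sum_mul _ _ _).symm
            _ = 0 := by
                refine Finset.sum_eq_zero fun b _ => ?_
                have hz := congrFun (hrcol b) i
                simp only [Matrix.mulVec, dotProduct, Pi.zero_apply] at hz
                rw [hz, zero_mul]
        rw [e1, e2, add_zero]
      have hcomp2 : ((1 : Matrix X₂ X₂ F) ⊗ₖ dY).mulVec (u₀ + uc) = z₂ := by
        funext p; obtain ⟨i, b'⟩ := p
        rw [Matrix.mulVec_add, Pi.add_apply]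
        have e2 : ((1 : Matrix X₂ X₂ F) ⊗ₖ dY).mulVec uc (i, b') = r (i, b') := by
          rw [one_kron_mulVec]
          calc ∑ a, dY b' a * uc (i, a)
              = ∑ a, ∑ b, r (i, b) * (dY b' a * e b a) := by
                refine Finset.sum_congr rfl fun a _ => ?_
                simp only [hucdef]
                rw [Finset.mul_sum]
                exact Finset.sum_congr rfl fun b _ => by ring
            _ = ∑ b, r (i, b) * ∑ a, dY b' a * e b a := by
                rw [Finset.sum_comm]
                exact Finset.sum_congr rfl fun b _ => (Finset.mul_sum _ _ _).symm
            _ = ∑ b, r (i, b) * (if b' = b then (1 : F) else 0) := by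
                refine Finset.sum_congr rfl fun b _ => ?_
                congr 1
                have hb := congrFun (he b) b'
                simp only [Matrix.mulVec, dotProduct] at hb
                rw [hb, Pi.single_apply]
            _ = r (i, b') := by simp
        rw [e2]
        simp only [hrdef]
        ring
      rw [Prod.mk.injEq]
      exact ⟨hcomp1, hcomp2⟩
    obtain ⟨a₀, ha₀⟩ := hex
    -- a functional killing W but not c a₀
    have hmk : (Submodule.Quotient.mk (c a₀) : (X₁ → F) ⧸ W) ≠ 0 := by
      intro h; exact ha₀ ((Submodule.Quotient.mk_eq_zero W).mp h)
    obtain ⟨f, hf⟩ : ∃ f : Module.Dual F ((X₁ → F) ⧸ W),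
        f (Submodule.Quotient.mk (c a₀)) ≠ 0 := by
      by_contra h; push_neg at h
      exact hmk ((Module.forall_dual_apply_eq_zero_iff F _).mp h)
    set φ : (X₁ → F) →ₗ[F] F := f.comp W.mkQ with hφdef
    have hφW : ∀ v ∈ W, φ v = 0 := by
      intro v hv
      simp [hφdef, Submodule.mkQ_apply, (Submodule.Quotient.mk_eq_zero W).2 hv]
    set v : A → F := fun a => φ (c a) with hvdef
    have hva₀ : v a₀ ≠ 0 := by simpa [hvdef, hφdef, Submodule.mkQ_apply] using hf
    have hvker : dY.mulVec v = 0 := by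
      funext b
      have hsum : dY.mulVec v b = φ (∑ a, dY b a • c a) := by
        rw [map_sum]
        simp only [Matrix.mulVec, dotProduct, hvdef, LinearMap.map_smul,
          smul_eq_mul]
      rw [hsum]
      have : (∑ a, dY b a • c a) = dX2.mulVec (fun j => z₂ (j, b)) := by
        rw [← hcol2 b]; funext i
        simp [Finset.sum_apply, hcdef]
      rw [this]
      exact hφW _ ⟨fun j => z₂ (j, b), rfl⟩
    have hvS : sInf SY ≤ hammingNorm v :=
      Nat.sInf_le ⟨v, hvker, fun h => hva₀ (congrFun h a₀), rfl⟩
    have hcS : ∀ a, v a ≠ 0 → sInf SX ≤ hammingNorm (c a) := by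
      intro a ha
      refine Nat.sInf_le ⟨c a, hc1 a, ?_, rfl⟩
      rintro ⟨u, hu⟩
      exact ha (hφW (c a) ⟨u, by simpa [Matrix.mulVecLin_apply] using hu⟩)
    have hz1w : sInf SX * sInf SY ≤ hammingNorm z₁ := by
      rw [hammingNorm_prod]
      calc sInf SX * sInf SY ≤ sInf SX * hammingNorm v :=
            Nat.mul_le_mul_left _ hvS
        _ = ∑ a ∈ Finset.univ.filter (fun a => v a ≠ 0), sInf SX := by
            rw [Finset.sum_const, smul_eq_mul, mul_comm]; rfl
        _ ≤ ∑ a ∈ Finset.univ.filter (fun a => v a ≠ 0), hammingNorm (c a) :=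
            Finset.sum_le_sum fun a ha => hcS a (by simpa using ha)
        _ ≤ ∑ a, hammingNorm (c a) :=
            Finset.sum_le_sum_of_subset (Finset.filter_subset _ _)
        _ = ∑ a, hammingNorm (fun j => z₁ (j, a)) := rfl
    calc sInf SX * sInf SY ≤ hammingNorm z₁ := hz1w
      _ ≤ hammingNorm z₁ + hammingNorm z₂ := Nat.le_add_right _ _
      _ = w := hw
  exact le_antisymm (Nat.sInf_le hPmem) (lower _ (Nat.sInf_mem ⟨_, hPmem⟩))
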